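/- Under the hypotheses of the main theorem, for A_{ij} ∈ 𝔄_{ij} and B_{ji} ∈ 𝔄_{ji} with i ≠ j, φ(A_{ij}B_{ji}) = φ(A_{ij})φ(B_{ji}). -/

import Mathlib

/-- The *-Jordan product `{A,B}_* = AB + BA*`. -/
def jstar {R : Type*} [Ring R] [StarRing R] (A B : R) : R := A * B + B * star A

/-- The iterated *-Jordan product `q_{n*}(x_1, ..., x_n)`. -/
def qstar {R : Type*} [Ring R] [StarRing R] : List R → R
  | [] => 0
  | x :: xs => xs.foldl jstar x

lemma foldl_jstar_replicate {R : Type*} [Ring R] [StarRing R] (P : R)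
    (hP : P * P = P) (hPs : star P = P) :
    ∀ k : ℕ, (List.replicate k P).foldl jstar P = 2 ^ k • P := by
  intro k
  induction k with
  | zero => simp
  | succ k ih =>
      rw [List.replicate_succ', List.foldl_append, ih]
      show jstar (2 ^ k • P) P = _
      rw [jstar, star_nsmul, hPs, smul_mul_assoc, mul_smul_comm, hP, ← two_nsmul,
        smul_smul, pow_succ, mul_comm]

lemma qstar_peirce {R : Type*} [Ring R] [StarRing R] (P A B : R)
    (hP : P * P = P) (hPs : star P = P) (hPA : P * A = A) (hAP : A * P = 0)
    (hBA : B * star A = 0) (m : ℕ) :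
    qstar (List.replicate m P ++ [A, B]) = 2 ^ (m - 1) • (A * B) := by
  cases m with
  | zero => simp [qstar, jstar, hBA]
  | succ k =>
      rw [List.replicate_succ]
      show (List.replicate k P ++ [A, B]).foldl jstar P = _
      rw [List.foldl_append, foldl_jstar_replicate P hP hPs]
      show jstar (jstar (2 ^ k • P) A) B = _
      have h1 : jstar (2 ^ k • P) A = 2 ^ k • A := by
        rw [jstar, star_nsmul, hPs, smul_mul_assoc, mul_smul_comm, hPA, hAP, smul_zero,
          add_zero]
      have h2 : jstar (2 ^ k • A) B = 2 ^ k • (A * B) := by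
        rw [jstar, star_nsmul, smul_mul_assoc, mul_smul_comm, hBA, smul_zero, add_zero]
      rw [h1, h2, Nat.succ_sub_one]

lemma phi_zero {M N : Type*} [AddCommGroup M] [AddCommGroup N] (φ : M → N)
    (hadd : ∀ A B : M, φ (A + B) = φ A + φ B) : φ 0 = 0 := by
  have h := hadd 0 0
  rw [add_zero] at h
  exact left_eq_add.mp h

lemma phi_nsmul {M N : Type*} [AddCommGroup M] [AddCommGroup N] (φ : M → N)
    (hadd : ∀ A B : M, φ (A + B) = φ A + φ B) (k : ℕ) (X : M) :
    φ (k • X) = k • φ X := by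
  induction k with
  | zero => simpa using phi_zero φ hadd
  | succ k ih => rw [succ_nsmul, hadd, ih, succ_nsmul]

lemma peirce_facts {R : Type*} [Ring R] [StarRing R] (P Q A B : R)
    (hPP : P * P = P) (hQP : Q * P = 0) (hPQ : P * Q = 0)
    (hPs : star P = P) (hQs : star Q = Q)
    (hA : P * A * Q = A) (hB : Q * B * P = B) :
    P * A = A ∧ A * P = 0 ∧ B * star A = 0 := by
  have h1 : P * A = A := by
    conv_lhs => rw [← hA]
    rw [show P * (P * A * Q) = P * P * A * Q by noncomm_ring, hPP, hA]
  have h2 : A * P = 0 := by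
    conv_lhs => rw [← hA]
    rw [show P * A * Q * P = P * A * (Q * P) by noncomm_ring, hQP, mul_zero]
  have hsA : star A = Q * star A * P := by
    conv_lhs => rw [← hA]
    rw [star_mul, star_mul, hPs, hQs, mul_assoc]
  refine ⟨h1, h2, ?_⟩
  rw [hsA, ← hB, show Q * B * P * (Q * star A * P) = Q * B * (P * Q) * star A * P
    by noncomm_ring, hPQ, mul_zero, zero_mul, zero_mul]

lemma aux_mult {R S : Type*} [Ring R] [StarRing R] [Ring S] [StarRing S] [Module ℂ S]
    (m : ℕ) (φ : R → S) (hadd : ∀ A B : R, φ (A + B) = φ A + φ B)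
    (P A B : R)
    (hP : P * P = P) (hPs : star P = P) (hPA : P * A = A) (hAP : A * P = 0)
    (hBA : B * star A = 0)
    (hQ : φ P * φ P = φ P) (hQs : star (φ P) = φ P) (hQA : φ P * φ A = φ A)
    (hAQ : φ A * φ P = 0) (hBAq : φ B * star (φ A) = 0)
    (hq : φ (qstar (List.replicate m P ++ [A, B])) =
      qstar (List.replicate m (φ P) ++ [φ A, φ B])) :
    φ (A * B) = φ A * φ B := by
  rw [qstar_peirce P A B hP hPs hPA hAP hBA m,
    qstar_peirce (φ P) (φ A) (φ B) hQ hQs hQA hAQ hBAq m,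
    phi_nsmul φ hadd] at hq
  have h : ((2 ^ (m - 1) : ℕ) : ℂ) • φ (A * B) = ((2 ^ (m - 1) : ℕ) : ℂ) • (φ A * φ B) := by
    rw [Nat.cast_smul_eq_nsmul, Nat.cast_smul_eq_nsmul]; exact hq
  have hc : ((2 ^ (m - 1) : ℕ) : ℂ) ≠ 0 := by
    exact_mod_cast (pow_ne_zero _ (two_ne_zero))
  have := congrArg (fun x => ((2 ^ (m - 1) : ℕ) : ℂ)⁻¹ • x) h
  simpa [inv_smul_smul₀ hc] using this

theorem stmt15 {𝔄 𝔄' : Type*} [CStarAlgebra 𝔄] [CStarAlgebra 𝔄']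
    (n : ℕ) (hn : 2 ≤ n)
    (P₁ : 𝔄) (hproj : P₁ * P₁ = P₁) (hsa : star P₁ = P₁) (hne0 : P₁ ≠ 0) (hne1 : P₁ ≠ 1)
    (φ : 𝔄 → 𝔄') (hbij : Function.Bijective φ) (hunital : φ 1 = 1) (hadd : ∀ A B : 𝔄, φ (A + B) = φ A + φ B) (hstar : ∀ A : 𝔄, φ (star A) = star (φ A))
    (hpeirce : ∀ Pi ∈ ({P₁, 1 - P₁} : Set 𝔄), ∀ Pj ∈ ({P₁, 1 - P₁} : Set 𝔄), ∀ X : 𝔄,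
      Pi * X * Pj = X → φ Pi * φ X * φ Pj = φ X)
    (hqI : ∀ A B : 𝔄, φ (qstar (List.replicate (n - 2) 1 ++ [A, B])) =
      qstar (List.replicate (n - 2) (φ 1) ++ [φ A, φ B]))
    (hqP : ∀ P ∈ ({P₁, 1 - P₁} : Set 𝔄), ∀ A B : 𝔄,
      φ (qstar (List.replicate (n - 2) P ++ [A, B])) =
      qstar (List.replicate (n - 2) (φ P) ++ [φ A, φ B])) :
    ∀ Pi ∈ ({P₁, 1 - P₁} : Set 𝔄), ∀ Pj ∈ ({P₁, 1 - P₁} : Set 𝔄), Pi ≠ Pj →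
      ∀ A B : 𝔄, Pi * A * Pj = A → Pj * B * Pi = B →
      φ (A * B) = φ A * φ B := by
  have hP1mem : P₁ ∈ ({P₁, 1 - P₁} : Set 𝔄) := Set.mem_insert _ _
  have h1Pmem : (1 - P₁) ∈ ({P₁, 1 - P₁} : Set 𝔄) := Set.mem_insert_of_mem _ rfl
  have h1P : (1 - P₁) * (1 - P₁) = 1 - P₁ := by
    rw [mul_sub, mul_one, sub_mul, one_mul, hproj]; abel
  have h1Ps : star (1 - P₁) = 1 - P₁ := by rw [star_sub, star_one, hsa]
  have hP1q : P₁ * (1 - P₁) = 0 := by rw [mul_sub, mul_one, hproj, sub_self]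
  have hqP1 : (1 - P₁) * P₁ = 0 := by rw [sub_mul, one_mul, hproj, sub_self]
  have hQ1 : φ (1 - P₁) = 1 - φ P₁ := by
    have h := hadd P₁ (1 - P₁)
    rw [show P₁ + (1 - P₁) = 1 by abel, hunital] at h
    exact eq_sub_of_add_eq' h.symm
  have hQs : star (φ P₁) = φ P₁ := by rw [← hstar, hsa]
  have h1Qs : star (1 - φ P₁) = 1 - φ P₁ := by rw [star_sub, star_one, hQs]
  have hQ3 : φ P₁ * φ P₁ * φ P₁ = φ P₁ :=
    hpeirce P₁ hP1mem P₁ hP1mem P₁ (by rw [hproj, hproj])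
  have hQ3' : (1 - φ P₁) * (1 - φ P₁) * (1 - φ P₁) = 1 - φ P₁ := by
    have h := hpeirce (1 - P₁) h1Pmem (1 - P₁) h1Pmem (1 - P₁) (by rw [h1P, h1P])
    rwa [hQ1] at h
  have hQ2 : φ P₁ * φ P₁ = φ P₁ := by
    have e : φ P₁ * φ P₁ + φ P₁ * φ P₁ + φ P₁ * φ P₁ =
        (1 - φ P₁) * (1 - φ P₁) * (1 - φ P₁) - 1 + (φ P₁ + φ P₁ + φ P₁)
          + φ P₁ * φ P₁ * φ P₁ := by noncomm_ring
    rw [hQ3', hQ3] at e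
    have h3 : φ P₁ * φ P₁ + φ P₁ * φ P₁ + φ P₁ * φ P₁ = φ P₁ + φ P₁ + φ P₁ := by
      rw [e]; abel
    have h3' : ((3 : ℕ) : ℂ) • (φ P₁ * φ P₁) = ((3 : ℕ) : ℂ) • φ P₁ := by
      rw [Nat.cast_smul_eq_nsmul, Nat.cast_smul_eq_nsmul]
      calc (3 : ℕ) • (φ P₁ * φ P₁) = φ P₁ * φ P₁ + φ P₁ * φ P₁ + φ P₁ * φ P₁ := by abel
        _ = φ P₁ + φ P₁ + φ P₁ := h3
        _ = (3 : ℕ) • φ P₁ := by abel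
    have hc : ((3 : ℕ) : ℂ) ≠ 0 := by norm_num
    have := congrArg (fun x => ((3 : ℕ) : ℂ)⁻¹ • x) h3'
    simpa [inv_smul_smul₀ hc] using this
  have h1Q2 : (1 - φ P₁) * (1 - φ P₁) = 1 - φ P₁ := by
    rw [mul_sub, mul_one, sub_mul, one_mul, hQ2]; abel
  have hQ1q : φ P₁ * (1 - φ P₁) = 0 := by rw [mul_sub, mul_one, hQ2, sub_self]
  have h1qQ : (1 - φ P₁) * φ P₁ = 0 := by rw [sub_mul, one_mul, hQ2, sub_self]
  intro Pi hPi Pj hPj hne A B hA hB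
  simp only [Set.mem_insert_iff, Set.mem_singleton_iff] at hPi hPj
  rcases hPi with h | h <;> rcases hPj with h' | h' <;> subst Pi <;> subst Pj
  · exact absurd rfl hne
  · -- Pi = P₁, Pj = 1 - P₁
    obtain ⟨hPA, hAP, hBA⟩ :=
      peirce_facts P₁ (1 - P₁) A B hproj hqP1 hP1q hsa h1Ps hA hB
    have hA' := hpeirce P₁ hP1mem (1 - P₁) h1Pmem A hA
    have hB' := hpeirce (1 - P₁) h1Pmem P₁ hP1mem B hB
    rw [hQ1] at hA' hB'
    obtain ⟨hQA, hAQ, hBAq⟩ :=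
      peirce_facts (φ P₁) (1 - φ P₁) (φ A) (φ B) hQ2 h1qQ hQ1q hQs h1Qs hA' hB'
    exact aux_mult (n - 2) φ hadd P₁ A B hproj hsa hPA hAP hBA hQ2 hQs hQA hAQ hBAq
      (hqP P₁ hP1mem A B)
  · -- Pi = 1 - P₁, Pj = P₁
    obtain ⟨hPA, hAP, hBA⟩ :=
      peirce_facts (1 - P₁) P₁ A B h1P hP1q hqP1 h1Ps hsa hA hB
    have hA' := hpeirce (1 - P₁) h1Pmem P₁ hP1mem A hA
    have hB' := hpeirce P₁ hP1mem (1 - P₁) h1Pmem B hB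
    rw [hQ1] at hA' hB'
    obtain ⟨hQA, hAQ, hBAq⟩ :=
      peirce_facts (1 - φ P₁) (φ P₁) (φ A) (φ B) h1Q2 hQ1q h1qQ h1Qs hQs hA' hB'
    have hq := hqP (1 - P₁) h1Pmem A B
    rw [hQ1] at hq
    exact aux_mult (n - 2) φ hadd (1 - P₁) A B h1P h1Ps hPA hAP hBA
      (by rw [hQ1]; exact h1Q2) (by rw [hQ1]; exact h1Qs)
      (by rw [hQ1]; exact hQA) (by rw [hQ1]; exact hAQ) hBAq
      (by rw [hQ1]; exact hq)
  · exact absurd rfl hne
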